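/- For positive definite matrices A, B and t ∈ [0,1], the weighted geometric mean A #_t B = A^(1/2)·(A^(-1/2)·B·A^(-1/2))^t·A^(1/2) satisfies δ(A, A #_t B) = t·δ(A,B), where δ(A,B) = ‖log(A^(-1/2)·B·A^(-1/2))‖₂ is the trace metric distance. -/

import Mathlib

open Matrix MeasureTheory
open scoped ComplexOrder

/-- Apply a real function to a Hermitian matrix via the spectral decomposition. -/
noncomputable def matFun {n : ℕ} (A : Matrix (Fin n) (Fin n) ℂ) (hA : A.IsHermitian)
    (g : ℝ → ℝ) : Matrix (Fin n) (Fin n) ℂ :=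
  (hA.eigenvectorUnitary : Matrix (Fin n) (Fin n) ℂ) *
    Matrix.diagonal (fun i => (g (hA.eigenvalues i) : ℂ)) *
    star (hA.eigenvectorUnitary : Matrix (Fin n) (Fin n) ℂ)

/-- Real power of a Hermitian matrix via the spectral decomposition. -/
noncomputable def mpow {n : ℕ} (A : Matrix (Fin n) (Fin n) ℂ) (hA : A.IsHermitian)
    (p : ℝ) : Matrix (Fin n) (Fin n) ℂ :=
  matFun A hA (fun x => x ^ p)

/-- Hilbert-Schmidt (Frobenius) norm of a matrix. -/
noncomputable def frob {n : ℕ} (X : Matrix (Fin n) (Fin n) ℂ) : ℝ :=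
  Real.sqrt (Matrix.trace (star X * X)).re
lemma matFun_eq_cfc {n : ℕ} (A : Matrix (Fin n) (Fin n) ℂ) (hA : A.IsHermitian) (g : ℝ → ℝ) :
    matFun A hA g = cfc g A := by
  rw [Matrix.IsHermitian.cfc_eq]; rfl

lemma spectrum_pos {n : ℕ} {A : Matrix (Fin n) (Fin n) ℂ} (hA : A.PosDef) :
    ∀ x ∈ spectrum ℝ A, 0 < x := by
  intro x hx
  rw [hA.1.spectrum_real_eq_range_eigenvalues] at hx
  obtain ⟨i, rfl⟩ := hx
  exact hA.eigenvalues_pos i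

lemma contOn_rpow {p : ℝ} {s : Set ℝ} (hs : ∀ x ∈ s, 0 < x) :
    ContinuousOn (fun x : ℝ => x ^ p) s := fun x hx =>
  ((Real.continuousAt_rpow_const x p (Or.inl (hs x hx).ne')).continuousWithinAt)

lemma contOn_log {s : Set ℝ} (hs : ∀ x ∈ s, 0 < x) :
    ContinuousOn Real.log s :=
  Real.continuousOn_log.mono fun x hx => (hs x hx).ne'

lemma cfc_rpow_cancel {n : ℕ} {A : Matrix (Fin n) (Fin n) ℂ} (hA : A.PosDef) (p : ℝ) :
    cfc (fun x : ℝ => x ^ p) A * cfc (fun x : ℝ => x ^ (-p)) A = 1 := by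
  have hsa : IsSelfAdjoint A := hA.1
  have hpos := spectrum_pos hA
  rw [← cfc_mul (fun x : ℝ => x ^ p) (fun x : ℝ => x ^ (-p)) A
      (contOn_rpow hpos) (contOn_rpow hpos)]
  rw [cfc_congr (g := fun _ => (1:ℝ)) (fun x hx => by
    rw [← Real.rpow_add (hpos x hx)]; norm_num)]
  exact cfc_const_one ℝ A

lemma posDef_conj {n : ℕ} {B C D : Matrix (Fin n) (Fin n) ℂ} (hB : B.PosDef)
    (hC : C.IsHermitian) (hDC : D * C = 1) : (C * B * C).PosDef := by
  have h1 : C * B * C = Cᴴ * B * C := by rw [hC.eq]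
  rw [h1]
  refine Matrix.PosDef.of_dotProduct_mulVec_pos (Matrix.isHermitian_conjTranspose_mul_mul C hB.1) fun x hx => ?_
  have hCx : C *ᵥ x ≠ 0 := by
    intro h
    apply hx
    have h2 : D *ᵥ (C *ᵥ x) = 0 := by rw [h, Matrix.mulVec_zero]
    rwa [Matrix.mulVec_mulVec, hDC, Matrix.one_mulVec] at h2
  have h3 := hB.dotProduct_mulVec_pos hCx
  rw [Matrix.star_mulVec, Matrix.dotProduct_mulVec, Matrix.vecMul_vecMul] at h3
  rw [Matrix.dotProduct_mulVec, ← Matrix.vecMul_vecMul, ← Matrix.vecMul_vecMul]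
  rwa [← Matrix.vecMul_vecMul, Matrix.dotProduct_mulVec] at h3

theorem stmt18 {n : ℕ} (A B : Matrix (Fin n) (Fin n) ℂ)
    (hA : A.PosDef) (hB : B.PosDef) (t : ℝ) (ht : t ∈ Set.Icc (0:ℝ) 1)
    (hM : (mpow A hA.1 (-(1/2)) * B * mpow A hA.1 (-(1/2))).IsHermitian)
    (hG : (mpow A hA.1 (-(1/2)) *
        (mpow A hA.1 (1/2) * mpow _ hM t * mpow A hA.1 (1/2)) *
        mpow A hA.1 (-(1/2))).IsHermitian) :
    frob (matFun _ hG Real.log) = t * frob (matFun _ hM Real.log) := by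
  rw [matFun_eq_cfc _ hG, matFun_eq_cfc _ hM Real.log,
    show mpow _ hM t = cfc (fun x : ℝ => x ^ t) _ from matFun_eq_cfc _ hM _]
  simp only [matFun_eq_cfc, mpow]
  -- abbreviations (no proofs involved now)
  set C : Matrix (Fin n) (Fin n) ℂ := cfc (fun x : ℝ => x ^ (-(1/2) : ℝ)) A with hCdef
  set D : Matrix (Fin n) (Fin n) ℂ := cfc (fun x : ℝ => x ^ ((1/2) : ℝ)) A with hDdef
  set M : Matrix (Fin n) (Fin n) ℂ := C * B * C with hMdef
  have hCD : C * D = 1 := by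
    have := cfc_rpow_cancel hA (-(1/2) : ℝ)
    rwa [neg_neg] at this
  have hDC : D * C = 1 := cfc_rpow_cancel hA ((1/2) : ℝ)
  have hCherm : C.IsHermitian := cfc_predicate (fun x : ℝ => x ^ (-(1/2) : ℝ)) A
  have hMpd : M.PosDef := posDef_conj hB hCherm hDC
  have hMpos := spectrum_pos hMpd
  have hMsa : IsSelfAdjoint M := hMpd.1
  have hGeq : C * (D * cfc (fun x : ℝ => x ^ t) M * D) * C = cfc (fun x : ℝ => x ^ t) M := by
    calc C * (D * cfc (fun x : ℝ => x ^ t) M * D) * C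
        = (C * D) * cfc (fun x : ℝ => x ^ t) M * (D * C) := by
          simp only [Matrix.mul_assoc]
      _ = cfc (fun x : ℝ => x ^ t) M := by rw [hCD, hDC, Matrix.one_mul, Matrix.mul_one]
  rw [hGeq]
  rw [← cfc_comp Real.log (fun x : ℝ => x ^ t) M hMsa
      (contOn_log (by
        rintro x ⟨y, hy, rfl⟩
        exact Real.rpow_pos_of_pos (hMpos y hy) t))
      (contOn_rpow hMpos)]
  have hcongr : cfc (Real.log ∘ fun x : ℝ => x ^ t) M = cfc (fun x : ℝ => t * Real.log x) M := by
    apply cfc_congr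
    intro x hx
    simp [Function.comp, Real.log_rpow (hMpos x hx)]
  rw [hcongr, cfc_const_mul t Real.log M (contOn_log hMpos)]
  obtain ⟨ht0, _⟩ := ht
  set Z := cfc Real.log M with hZdef
  have hstar : star (t • Z) = t • star Z := by
    rw [star_smul]; norm_num
  rw [frob, frob, hstar, smul_mul_smul_comm, Matrix.trace_smul]
  have hre : ((t * t) • (Matrix.trace (star Z * Z)) : ℂ).re
      = (t * t) * (Matrix.trace (star Z * Z)).re := by
    rw [Complex.real_smul, Complex.mul_re]; simp
  rw [hre, Real.sqrt_mul (mul_self_nonneg t), Real.sqrt_mul_self ht0]
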